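/- Let {N_s}_{s∈S} be a finite AVQC that is symmetrizable: for every finite set {ρ_1,…,ρ_M} ⊆ S(H^{⊗l}) there is a map p : {ρ_1,…,ρ_M} → P(S^l) with ∑_{s^l} p(ρ_i)(s^l) N_{s^l}(ρ_j) = ∑_{s^l} p(ρ_j)(s^l) N_{s^l}(ρ_i) for all i,j. Then every (l, M)-deterministic code (ρ_i, D_i)_{i=1}^M with M ≥ 2 has worst-case average error probability at least 1/4: there exists s^l ∈ S^l with (1/M) ∑_{i=1}^M (1 − tr(N_{s^l}(ρ_i) D_i)) ≥ 1/4. -/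

import Mathlib

open scoped ComplexOrder

/-- Kraus characterization of quantum channels (CPTP maps). -/
def IsCPTP {ι κ : Type*} [Fintype ι] [DecidableEq ι] [Fintype κ] [DecidableEq κ]
    (N : Matrix ι ι ℂ →ₗ[ℂ] Matrix κ κ ℂ) : Prop :=
  ∃ (m : ℕ) (G : Fin m → Matrix κ ι ℂ),
    (∀ a, N a = ∑ j, G j * a * (G j).conjTranspose) ∧
      (∑ j, (G j).conjTranspose * G j = 1)

/-- The elementary tensor `a₁ ⊗ ⋯ ⊗ a_l` of matrices. -/
def elemTensor {ι : Type*} {l : ℕ} (a : Fin l → Matrix ι ι ℂ) :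
    Matrix (Fin l → ι) (Fin l → ι) ℂ :=
  Matrix.of fun x y => ∏ i, a i (x i) (y i)

open Matrix Finset

section tensorHelpers
variable {l : ℕ}

/-- Rectangular elementary tensor of matrices. -/
def elemTensorR {α β : Type*} (b : Fin l → Matrix α β ℂ) :
    Matrix (Fin l → α) (Fin l → β) ℂ :=
  Matrix.of fun x y => ∏ i, b i (x i) (y i)

lemma elemTensorR_mul {α β γ : Type*} [Fintype β]
    (b : Fin l → Matrix α β ℂ) (c : Fin l → Matrix β γ ℂ) :
    elemTensorR b * elemTensorR c = elemTensorR (fun i => b i * c i) := by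
  ext x y
  simp only [elemTensorR, Matrix.mul_apply, Matrix.of_apply]
  rw [Finset.prod_univ_sum (fun _ => (Finset.univ : Finset β))
      (fun i t => b i (x i) t * c i t (y i)), Fintype.piFinset_univ]
  simp [Finset.prod_mul_distrib]

lemma elemTensorR_conjTranspose {α β : Type*} (b : Fin l → Matrix α β ℂ) :
    (elemTensorR b)ᴴ = elemTensorR (fun i => (b i)ᴴ) := by
  ext x y
  simp [elemTensorR, Matrix.conjTranspose_apply, map_prod]

lemma sum_elemTensorR {α β : Type*} {κ' : Fin l → Type*} [∀ i, Fintype (κ' i)]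
    (f : ∀ i, κ' i → Matrix α β ℂ) :
    ∑ j : (∀ i, κ' i), elemTensorR (fun i => f i (j i)) =
      elemTensorR (fun i => ∑ t, f i t) := by
  ext x y
  simp only [Matrix.sum_apply, elemTensorR, Matrix.of_apply]
  rw [Finset.prod_univ_sum (fun i => (Finset.univ : Finset (κ' i)))
      (fun i t => f i t (x i) (y i)), Fintype.piFinset_univ]

lemma elemTensorR_one {α : Type*} [DecidableEq α] :
    elemTensorR (fun _ : Fin l => (1 : Matrix α α ℂ)) = 1 := by
  ext x y
  simp [elemTensorR, Matrix.one_apply, Finset.prod_boole, funext_iff]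

lemma elemTensor_eq_R {ι : Type*} (a : Fin l → Matrix ι ι ℂ) :
    elemTensor a = elemTensorR a := rfl

lemma stdBasisMatrix_eq_elemTensor {ι : Type*} [DecidableEq ι]
    (x y : Fin l → ι) :
    Matrix.single x y (1 : ℂ) =
      elemTensor (fun i => Matrix.single (x i) (y i) 1) := by
  ext u v
  simp [Matrix.single, elemTensor, Finset.prod_boole, funext_iff, forall_and]

end tensorHelpers

section psdHelpers
open Matrix Finset
variable {n : Type*} [Fintype n] [DecidableEq n]

lemma psd_trace_nonneg {A : Matrix n n ℂ} (hA : A.PosSemidef) : 0 ≤ A.trace := by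
  rw [Matrix.trace]
  refine Finset.sum_nonneg fun i _ => ?_
  have := hA.dotProduct_mulVec_nonneg (Pi.single i 1)
  simpa [Matrix.mulVec_single, dotProduct, Pi.single_apply, apply_ite] using this

omit [DecidableEq n] in
lemma psd_sum {J : Type*} (s : Finset J) (f : J → Matrix n n ℂ)
    (h : ∀ j ∈ s, (f j).PosSemidef) : (∑ j ∈ s, f j).PosSemidef :=
  Finset.sum_induction f _ (fun a b ha hb => ha.add hb) Matrix.PosSemidef.zero h

lemma psd_trace_mul_nonneg {A B : Matrix n n ℂ} (hA : A.PosSemidef) (hB : B.PosSemidef) :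
    0 ≤ (A * B).trace := by
  open scoped MatrixOrder in
  obtain ⟨C, rfl⟩ := CStarAlgebra.nonneg_iff_eq_star_mul_self.mp hA.nonneg
  rw [Matrix.trace_mul_cycle, Matrix.trace_mul_cycle]
  exact psd_trace_nonneg (hB.mul_mul_conjTranspose_same C)

omit [DecidableEq n] in
lemma psd_smul {A : Matrix n n ℂ} (hA : A.PosSemidef) {c : ℝ} (hc : 0 ≤ c) :
    ((c : ℂ) • A).PosSemidef := by
  refine Matrix.PosSemidef.of_dotProduct_mulVec_nonneg ?_ ?_
  · show ((c : ℂ) • A)ᴴ = _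
    rw [Matrix.conjTranspose_smul, hA.1.eq]
    congr 1
    simp [Complex.star_def, Complex.conj_ofReal]
  · intro x
    rw [Matrix.smul_mulVec, dotProduct_smul, smul_eq_mul]
    exact mul_nonneg (Complex.zero_le_real.2 hc) (hA.dotProduct_mulVec_nonneg x)

end psdHelpers

open Matrix Finset in
/-- Kraus representation for the tensor-product channel. -/
lemma NT_kraus {ι κ S : Type*} [Fintype ι] [DecidableEq ι]
    [Fintype κ] [DecidableEq κ] [Fintype S]
    (Ns : S → (Matrix ι ι ℂ →ₗ[ℂ] Matrix κ κ ℂ)) (hNs : ∀ s, IsCPTP (Ns s))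
    {l : ℕ}
    (NT : (Fin l → S) → (Matrix (Fin l → ι) (Fin l → ι) ℂ →ₗ[ℂ]
      Matrix (Fin l → κ) (Fin l → κ) ℂ))
    (hNT : ∀ (sl : Fin l → S) (a : Fin l → Matrix ι ι ℂ),
      NT sl (elemTensor a) = elemTensor fun i => Ns (sl i) (a i))
    (sl : Fin l → S) :
    ∃ (J : Type) (_ : Fintype J) (Gt : J → Matrix (Fin l → κ) (Fin l → ι) ℂ),
      (∀ a, NT sl a = ∑ j, Gt j * a * (Gt j)ᴴ) ∧
        ∑ j, (Gt j)ᴴ * Gt j = 1 := by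
  choose m G hG1 hG2 using hNs
  set Gt : (∀ i : Fin l, Fin (m (sl i))) → Matrix (Fin l → κ) (Fin l → ι) ℂ :=
    fun j => elemTensorR (fun i => G (sl i) (j i)) with hGt
  refine ⟨∀ i : Fin l, Fin (m (sl i)), inferInstance, Gt, ?_, ?_⟩
  · set K : Matrix (Fin l → ι) (Fin l → ι) ℂ →ₗ[ℂ] Matrix (Fin l → κ) (Fin l → κ) ℂ :=
      { toFun := fun a => ∑ j, Gt j * a * (Gt j)ᴴ,
        map_add' := by
          intro a b
          simp [Matrix.mul_add, Matrix.add_mul, Finset.sum_add_distrib],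
        map_smul' := by
          intro c a
          simp [Matrix.mul_smul, Matrix.smul_mul, Finset.smul_sum] } with hK
    have key : ∀ x y : Fin l → ι, NT sl (Matrix.single x y (1:ℂ)) =
        K (Matrix.single x y (1:ℂ)) := by
      intro x y
      have hterm : ∀ j : (∀ i : Fin l, Fin (m (sl i))),
          Gt j * elemTensor (fun i => Matrix.single (x i) (y i) (1:ℂ)) * (Gt j)ᴴ =
            elemTensorR (fun i => G (sl i) (j i) *
              Matrix.single (x i) (y i) (1:ℂ) * (G (sl i) (j i))ᴴ) := by
        intro j
        rw [hGt, elemTensor_eq_R, elemTensorR_mul, elemTensorR_conjTranspose, elemTensorR_mul]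
      have hsum := sum_elemTensorR (κ' := fun i : Fin l => Fin (m (sl i)))
        (f := fun i t => G (sl i) t * Matrix.single (x i) (y i) (1:ℂ) * (G (sl i) t)ᴴ)
      rw [stdBasisMatrix_eq_elemTensor, hNT]
      show _ = ∑ j, Gt j * elemTensor (fun i => Matrix.single (x i) (y i) (1:ℂ)) * (Gt j)ᴴ
      rw [Finset.sum_congr rfl (fun j _ => hterm j), hsum, elemTensor_eq_R,
        show (fun i => Ns (sl i) (Matrix.single (x i) (y i) (1:ℂ))) =
            fun i => ∑ t, G (sl i) t * Matrix.single (x i) (y i) (1:ℂ) * (G (sl i) t)ᴴ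
          from funext fun i => hG1 (sl i) _]
    have : NT sl = K := by
      apply Module.Basis.ext (Matrix.stdBasis ℂ (Fin l → ι) (Fin l → ι))
      rintro ⟨x, y⟩
      rw [Matrix.stdBasis_eq_single]
      exact key x y
    intro a
    rw [this]
    rfl
  · have hterm : ∀ j : (∀ i : Fin l, Fin (m (sl i))),
        (Gt j)ᴴ * Gt j = elemTensorR (fun i => (G (sl i) (j i))ᴴ * G (sl i) (j i)) := by
      intro j; rw [hGt, elemTensorR_conjTranspose, elemTensorR_mul]
    have hsum := sum_elemTensorR (κ' := fun i : Fin l => Fin (m (sl i)))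
      (f := fun i t => (G (sl i) t)ᴴ * G (sl i) t)
    rw [Finset.sum_congr rfl (fun j _ => hterm j), hsum]
    rw [show (fun i : Fin l => ∑ t, (G (sl i) t)ᴴ * G (sl i) t) = fun _ => (1 : Matrix ι ι ℂ)
      from funext fun i => hG2 (sl i)]
    exact elemTensorR_one

/-- for a symmetrizable AVQC `{N_s}` (symmetrizability witnessed at
block length `l` for the code states), every `(l,M)`-deterministic code with `M ≥ 2`
has worst-case average error probability at least `1/4`: there is an `s^l` with
`(1/M) ∑ᵢ (1 − tr(N_{s^l}(ρᵢ) Dᵢ)) ≥ 1/4`. -/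
theorem stmt_19 {ι κ S : Type*} [Fintype ι] [DecidableEq ι]
    [Fintype κ] [DecidableEq κ] [Fintype S]
    (Ns : S → (Matrix ι ι ℂ →ₗ[ℂ] Matrix κ κ ℂ)) (hNs : ∀ s, IsCPTP (Ns s))
    (l : ℕ) (hl : 0 < l)
    (NT : (Fin l → S) → (Matrix (Fin l → ι) (Fin l → ι) ℂ →ₗ[ℂ]
      Matrix (Fin l → κ) (Fin l → κ) ℂ))
    (hNT : ∀ (sl : Fin l → S) (a : Fin l → Matrix ι ι ℂ),
      NT sl (elemTensor a) = elemTensor fun i => Ns (sl i) (a i))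
    (M : ℕ) (hM : 2 ≤ M)
    (ρ : Fin M → Matrix (Fin l → ι) (Fin l → ι) ℂ)
    (hρ : ∀ i, (ρ i).PosSemidef ∧ (ρ i).trace = 1)
    (hsym : ∃ p : Fin M → ((Fin l → S) → ℝ),
      (∀ i, (∀ sl, 0 ≤ p i sl) ∧ ∑ sl, p i sl = 1) ∧
      ∀ i j, ∑ sl, ((p i sl : ℝ) : ℂ) • NT sl (ρ j) =
        ∑ sl, ((p j sl : ℝ) : ℂ) • NT sl (ρ i))
    (D : Fin M → Matrix (Fin l → κ) (Fin l → κ) ℂ)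
    (hD : ∀ i, (D i).PosSemidef) (hDsum : ∑ i, D i = 1) :
    ∃ sl : Fin l → S,
      (1 / (M : ℝ)) * ∑ i, (1 - ((NT sl (ρ i)) * D i).trace.re) ≥ 1 / 4 := by
  classical
  obtain ⟨p, hp, hpsym⟩ := hsym
  by_contra hcon
  push_neg at hcon
  have hMR : (2:ℝ) ≤ (M:ℝ) := by exact_mod_cast hM
  have hMpos : (0:ℝ) < M := by linarith
  -- channel facts
  have hpsd : ∀ (sl : Fin l → S) (a : Matrix (Fin l → ι) (Fin l → ι) ℂ),
      a.PosSemidef → ((NT sl) a).PosSemidef := by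
    intro sl a ha
    obtain ⟨J, _, Gt, h1, h2⟩ := NT_kraus Ns hNs NT hNT sl
    rw [h1 a]
    exact psd_sum _ _ fun j _ => ha.mul_mul_conjTranspose_same (Gt j)
  have htr : ∀ (sl : Fin l → S) (a : Matrix (Fin l → ι) (Fin l → ι) ℂ),
      ((NT sl) a).trace = a.trace := by
    intro sl a
    obtain ⟨J, _, Gt, h1, h2⟩ := NT_kraus Ns hNs NT hNT sl
    rw [h1 a, Matrix.trace_sum]
    calc ∑ j, (Gt j * a * (Gt j)ᴴ).trace
        = ∑ j, ((Gt j)ᴴ * Gt j * a).trace := by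
          exact Finset.sum_congr rfl fun j _ => Matrix.trace_mul_cycle (Gt j) a (Gt j)ᴴ
      _ = ((∑ j, (Gt j)ᴴ * Gt j) * a).trace := by
          rw [Finset.sum_mul, Matrix.trace_sum]
      _ = a.trace := by rw [h2, Matrix.one_mul]
  -- error quantities
  set e : Fin M → (Fin l → S) → ℝ :=
    fun i sl => 1 - ((NT sl (ρ i)) * D i).trace.re with he
  have hDcomp : ∀ i : Fin M, ((1 : Matrix (Fin l → κ) (Fin l → κ) ℂ) - D i).PosSemidef := by
    intro i
    have h1 : (1 : Matrix (Fin l → κ) (Fin l → κ) ℂ) - D i = ∑ j ∈ Finset.univ.erase i, D j := by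
      rw [← hDsum, ← Finset.add_sum_erase Finset.univ D (Finset.mem_univ i)]
      rw [add_sub_cancel_left]
    rw [h1]
    exact psd_sum _ _ fun j _ => hD j
  have he_nonneg : ∀ i sl, 0 ≤ e i sl := by
    intro i sl
    have hw := psd_trace_mul_nonneg (hpsd sl (ρ i) (hρ i).1) (hDcomp i)
    have hsplit : ((NT sl (ρ i)) * (1 - D i)).trace
        = (NT sl (ρ i)).trace - ((NT sl (ρ i)) * D i).trace := by
      rw [Matrix.mul_sub, Matrix.mul_one, Matrix.trace_sub]
    rw [hsplit, htr sl (ρ i), (hρ i).2] at hw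
    have := (Complex.le_def.mp hw).1
    simp only [Complex.zero_re, Complex.sub_re, Complex.one_re] at this
    simpa [he] using this
  set A : Fin M → Fin M → ℝ := fun i k => ∑ sl, p k sl * e i sl with hA
  have hA_nonneg : ∀ i k, 0 ≤ A i k := fun i k =>
    Finset.sum_nonneg fun sl _ => mul_nonneg ((hp k).1 sl) (he_nonneg i sl)
  -- the expectation of the error, expressed through σ
  have hAval : ∀ i k, A i k = 1 -
      (((∑ sl, ((p k sl : ℝ) : ℂ) • NT sl (ρ i)) * D i).trace).re := by
    intro i k
    have hmul : (∑ sl, ((p k sl : ℝ) : ℂ) • NT sl (ρ i)) * D i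
        = ∑ sl, ((p k sl : ℝ) : ℂ) • ((NT sl (ρ i)) * D i) := by
      rw [Finset.sum_mul]
      exact Finset.sum_congr rfl fun sl _ => Matrix.smul_mul _ _ _
    rw [hmul, Matrix.trace_sum]
    simp only [Matrix.trace_smul, smul_eq_mul]
    rw [Complex.re_sum]
    have : ∀ sl, (((p k sl : ℝ) : ℂ) * ((NT sl (ρ i)) * D i).trace).re
        = p k sl * (((NT sl (ρ i)) * D i).trace).re := by
      intro sl; simp [Complex.mul_re]
    rw [Finset.sum_congr rfl fun sl _ => this sl]
    have : A i k = ∑ sl, p k sl - ∑ sl, p k sl * (((NT sl (ρ i)) * D i).trace).re := by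
      rw [hA, ← Finset.sum_sub_distrib]
      exact Finset.sum_congr rfl fun sl _ => by rw [he]; ring
    rw [this, (hp k).2]
  -- key pairwise bound
  have hpair : ∀ i k : Fin M, i ≠ k → 1 ≤ A i k + A k i := by
    intro i k hik
    set σ : Matrix (Fin l → κ) (Fin l → κ) ℂ :=
      ∑ sl, ((p k sl : ℝ) : ℂ) • NT sl (ρ i) with hσ
    have hσpsd : σ.PosSemidef :=
      psd_sum _ _ fun sl _ => psd_smul (hpsd sl (ρ i) (hρ i).1) ((hp k).1 sl)
    have hσtr : σ.trace = 1 := by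
      rw [hσ, Matrix.trace_sum]
      simp only [Matrix.trace_smul, smul_eq_mul, htr]
      have : ∀ sl : Fin l → S, ((p k sl : ℝ) : ℂ) * (ρ i).trace = ((p k sl : ℝ) : ℂ) := by
        intro sl; rw [(hρ i).2, mul_one]
      rw [Finset.sum_congr rfl fun sl _ => this sl, ← Complex.ofReal_sum, (hp k).2,
        Complex.ofReal_one]
    have hAik : A i k = 1 - ((σ * D i).trace).re := hAval i k
    have hAki : A k i = 1 - ((σ * D k).trace).re := by
      rw [hAval k i]
      congr 2
      rw [hσ, hpsym i k]
    -- sum over all j of tr(σ D j) = 1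
    have hall : ∑ j, ((σ * D j).trace).re = 1 := by
      have : ∑ j, (σ * D j).trace = (1 : ℂ) := by
        rw [← Matrix.trace_sum, ← Finset.mul_sum, hDsum, Matrix.mul_one, hσtr]
      calc ∑ j, ((σ * D j).trace).re = (∑ j, (σ * D j).trace).re := (Complex.re_sum _ _).symm
        _ = 1 := by rw [this]; simp
    have hterm_nonneg : ∀ j : Fin M, 0 ≤ ((σ * D j).trace).re := by
      intro j
      have := (Complex.le_def.mp (psd_trace_mul_nonneg hσpsd (hD j))).1
      simpa using this
    have hsub : ((σ * D i).trace).re + ((σ * D k).trace).re ≤ 1 := by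
      calc ((σ * D i).trace).re + ((σ * D k).trace).re
          = ∑ j ∈ ({i, k} : Finset (Fin M)), ((σ * D j).trace).re :=
            (Finset.sum_pair (f := fun j => ((σ * D j).trace).re) hik).symm
        _ ≤ ∑ j, ((σ * D j).trace).re :=
            Finset.sum_le_sum_of_subset_of_nonneg (Finset.subset_univ _)
              (fun j _ _ => hterm_nonneg j)
        _ = 1 := hall
    rw [hAik, hAki]
    linarith
  -- strict upper bound for each k
  have hup : ∀ k : Fin M, ∑ i, A i k < (M:ℝ) / 4 := by
    intro k
    have hXlt : ∀ sl, ∑ i, e i sl < (M:ℝ) / 4 := by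
      intro sl
      have := hcon sl
      have h2 : (M:ℝ) * ((1 / (M : ℝ)) * ∑ i, e i sl) < (M:ℝ) * (1/4) :=
        mul_lt_mul_of_pos_left this hMpos
      rw [← mul_assoc, mul_one_div_cancel (ne_of_gt hMpos), one_mul] at h2
      linarith
    obtain ⟨sl0, _, hne⟩ : ∃ sl0 ∈ Finset.univ, p k sl0 ≠ 0 := by
      apply Finset.exists_ne_zero_of_sum_ne_zero
      rw [(hp k).2]; norm_num
    have hpos0 : 0 < p k sl0 := lt_of_le_of_ne ((hp k).1 sl0) (Ne.symm hne)
    have hswap : ∑ i, A i k = ∑ sl, p k sl * ∑ i, e i sl := by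
      rw [Finset.sum_comm (f := fun i sl => p k sl * e i sl)]
      exact Finset.sum_congr rfl fun sl _ => (Finset.mul_sum _ _ _).symm
    rw [hswap]
    calc ∑ sl, p k sl * ∑ i, e i sl < ∑ sl, p k sl * ((M:ℝ)/4) := by
          apply Finset.sum_lt_sum
          · intro sl _
            exact mul_le_mul_of_nonneg_left (le_of_lt (hXlt sl)) ((hp k).1 sl)
          · exact ⟨sl0, Finset.mem_univ sl0,
              mul_lt_mul_of_pos_left (hXlt sl0) hpos0⟩
      _ = (M:ℝ)/4 := by rw [← Finset.sum_mul, (hp k).2, one_mul]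
  -- combine
  set T : ℝ := ∑ k, ∑ i, A i k with hT
  have hTlt : T < (M:ℝ) * ((M:ℝ)/4) := by
    rw [hT]
    calc ∑ k, ∑ i, A i k < ∑ _k : Fin M, (M:ℝ)/4 :=
          Finset.sum_lt_sum_of_nonempty ⟨⟨0, by omega⟩, Finset.mem_univ _⟩
            (fun k _ => hup k)
      _ = (M:ℝ) * ((M:ℝ)/4) := by rw [Finset.sum_const, Finset.card_univ, Fintype.card_fin,
            nsmul_eq_mul]
  have hTlow : (M:ℝ) * ((M:ℝ) - 1) ≤ 2 * T := by
    have h1 : ∀ k, ∑ i : Fin M, (if i = k then (0:ℝ) else 1) = (M:ℝ) - 1 := by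
      intro k
      have : ∑ i : Fin M, (if i = k then (0:ℝ) else 1)
          = ∑ i : Fin M, ((1:ℝ) - if i = k then 1 else 0) := by
        refine Finset.sum_congr rfl fun i _ => ?_
        by_cases h : i = k <;> simp [h]
      rw [this, Finset.sum_sub_distrib, Finset.sum_const, Finset.card_univ, Fintype.card_fin,
        nsmul_eq_mul, mul_one, Finset.sum_ite_eq' Finset.univ k (fun _ => (1:ℝ)),
        if_pos (Finset.mem_univ k)]
    have h2 : ∑ k, ∑ i : Fin M, (if i = k then (0:ℝ) else 1) ≤ ∑ k, ∑ i, (A i k + A k i) := by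
      refine Finset.sum_le_sum fun k _ => Finset.sum_le_sum fun i _ => ?_
      by_cases h : i = k
      · subst h; simp [add_nonneg (hA_nonneg i i) (hA_nonneg i i)]
      · simpa [h] using hpair i k h
    have h3 : ∑ k, ∑ i : Fin M, (A i k + A k i) = 2 * T := by
      rw [hT]
      have : ∑ k, ∑ i : Fin M, (A i k + A k i)
          = (∑ k, ∑ i, A i k) + ∑ k, ∑ i, A k i := by
        simp [Finset.sum_add_distrib]
      rw [this, Finset.sum_comm (f := fun k i => A k i)]
      ring
    have h4 : ∑ k : Fin M, ((M:ℝ) - 1) = (M:ℝ) * ((M:ℝ) - 1) := by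
      rw [Finset.sum_const, Finset.card_univ, Fintype.card_fin, nsmul_eq_mul]
    calc (M:ℝ) * ((M:ℝ) - 1) = ∑ k : Fin M, ((M:ℝ) - 1) := h4.symm
      _ = ∑ k, ∑ i : Fin M, (if i = k then (0:ℝ) else 1) :=
          (Finset.sum_congr rfl fun k _ => (h1 k).symm)
      _ ≤ ∑ k, ∑ i, (A i k + A k i) := h2
      _ = 2 * T := h3
  nlinarith [hTlt, hTlow, hMR]
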